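/- Let G be a finite group, let (g₁, …, gₙ) be an irredundant generating sequence of G, and for each i let Mᵢ be a maximal subgroup of G containing the subgroup generated by {g_j : j ≠ i}. Then g_i ∉ M_i for each i (so (M₁, …, Mₙ) corresponds to (g₁, …, gₙ)), and the sequence (M₁, …, Mₙ) is in general position. -/
import Mathlib


section Defs

variable {G : Type*} [Group G]

/-- `g` is a generating sequence of `G`: the set of its entries generates `G`. -/
def IsGenSeq {n : ℕ} (g : Fin n → G) : Prop :=
  Subgroup.closure (Set.range g) = ⊤

/-- `g` is irredundant: for each `i`, the entries other than `g i` do not generate `G`. -/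
def IsIrred {n : ℕ} (g : Fin n → G) : Prop :=
  ∀ i : Fin n, Subgroup.closure (g '' {j | j ≠ i}) ≠ ⊤

/-- `m(G)`: the largest length of an irredundant generating sequence of `G`. -/
noncomputable def maxIrredLen (G : Type*) [Group G] : ℕ :=
  sSup {n | ∃ g : Fin n → G, IsGenSeq g ∧ IsIrred g}

/-- `G` satisfies the replacement property. -/
def ReplacementProperty (G : Type*) [Group G] : Prop :=
  ∀ g : Fin (maxIrredLen G) → G, IsGenSeq g → IsIrred g →
    ∀ x : G, x ≠ 1 → ∃ i, IsGenSeq (Function.update g i x)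

/-- `x` is a witness to failure of the replacement property for `G`. -/
def IsWitnessToFailure {G : Type*} [Group G] (x : G) : Prop :=
  x ≠ 1 ∧ ∃ g : Fin (maxIrredLen G) → G, IsGenSeq g ∧ IsIrred g ∧
    ∀ i, ¬ IsGenSeq (Function.update g i x)

/-- A family of subgroups is in general position. -/
def InGeneralPosition {n : ℕ} (H : Fin n → Subgroup G) : Prop :=
  ∀ j, ¬ ((⨅ i ∈ ({j}ᶜ : Set (Fin n)), H i) ≤ H j)

/-- The sequence of subgroups `M` corresponds to the sequence of elements `g`. -/
def Corresponds {n : ℕ} (M : Fin n → Subgroup G) (g : Fin n → G) : Prop :=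
  (∀ i j, j ≠ i → g i ∈ M j) ∧ ∀ i, g i ∉ M i

end Defs

/-- `PSL(2,p)`. -/
abbrev PSL (p : ℕ) : Type := Matrix.ProjectiveSpecialLinearGroup (Fin 2) (ZMod p)

theorem corresponding_maximal_subgroups_general_position {G : Type*} [Group G] [Finite G]
    {n : ℕ} (g : Fin n → G) (hgen : IsGenSeq g) (hirr : IsIrred g)
    (M : Fin n → Subgroup G) (hmax : ∀ i, IsCoatom (M i))
    (hM : ∀ i, Subgroup.closure (g '' {j | j ≠ i}) ≤ M i) :
    (∀ i, g i ∉ M i) ∧ InGeneralPosition M := by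
  have hmem : ∀ i j : Fin n, j ≠ i → g j ∈ M i := by
    intro i j hji
    exact hM i (Subgroup.subset_closure ⟨j, hji, rfl⟩)
  have hnot : ∀ i, g i ∉ M i := by
    intro i hi
    apply (hmax i).1
    rw [eq_top_iff, ← hgen]
    rw [Subgroup.closure_le]
    rintro x ⟨j, rfl⟩
    by_cases hj : j = i
    · subst hj; exact hi
    · exact hmem i j hj
  refine ⟨hnot, fun j hle => hnot j (hle ?_)⟩
  simp only [Subgroup.mem_iInf]
  intro i hi
  exact hmem i j (Ne.symm hi)
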